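/- Let λ : ℕ≥1 → ℂ satisfy λ(1) = 1 and the Hecke multiplicativity relation λ(m)λ(n) = ∑_{d ∣ gcd(m,n)} λ(mn/d²) for all m, n ≥ 1, and suppose there exist constants A > 0 and θ ≥ 0 with |λ(n)| ≤ A n^θ for all n. Let w ∈ ℂ and s ∈ ℂ with Re(s) > 1 + θ + max(Re w, 0). Then the series L(s) := ∑_{n≥1} λ(n) n^{−s}, L(s − w) := ∑_{n≥1} λ(n) n^{−(s−w)}, and ∑_{n≥1} λ(n) σ_w(n) n^{−s} all converge absolutely, ζ(2s − w) ≠ 0, and ∑_{n=1}^∞ λ(n) σ_w(n) n^{−s} = L(s) · L(s − w) / ζ(2s − w). -/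

import Mathlib

open Complex Filter Topology

/-- The divisor sum `σ_w(n) = ∑_{d ∣ n} d^w` with complex exponent `w`. -/
noncomputable def csigma (w : ℂ) (n : ℕ) : ℂ := ∑ d ∈ n.divisors, (d : ℂ) ^ w

open LSeries in
open scoped LSeries.notation in
private lemma hecke_filter_sq (k : ℕ) (hk : k ≠ 0) :
    (k*k).divisors.filter (fun j => j*j = k*k) = {k} := by
  ext j
  simp only [Finset.mem_filter, Nat.mem_divisors, Finset.mem_singleton]
  constructor
  · rintro ⟨-, hj⟩; exact Nat.mul_self_inj.mp hj
  · rintro rfl; exact ⟨⟨dvd_mul_right j j, mul_ne_zero hk hk⟩, rfl⟩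

open LSeries in
open scoped LSeries.notation in
private lemma hecke_conv_eq (a : ℕ → ℂ) (w : ℂ)
    (hmult : ∀ m n : ℕ, 1 ≤ m → 1 ≤ n →
      a m * a n = ∑ d ∈ (Nat.gcd m n).divisors, a (m * n / d ^ 2)) :
    (a ⍟ (fun n => a n * (n:ℂ)^w)) =
      ((fun n : ℕ => ∑ k ∈ n.divisors.filter (fun k => k*k = n), (k:ℂ)^w) ⍟
        (fun n => a n * (∑ d ∈ n.divisors, (d:ℂ)^w))) := by
  funext N
  rcases eq_or_ne N 0 with rfl | hN
  · simp
  simp only [LSeries.convolution_def]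
  calc ∑ p ∈ N.divisorsAntidiagonal, a p.1 * (a p.2 * (p.2:ℂ)^w)
      = ∑ p ∈ N.divisorsAntidiagonal, ∑ d ∈ (Nat.gcd p.1 p.2).divisors,
          a (N / d ^ 2) * (p.2:ℂ)^w := by
        refine Finset.sum_congr rfl fun p hp => ?_
        obtain ⟨hpN, -⟩ := Nat.mem_divisorsAntidiagonal.mp hp
        obtain ⟨h1, h2⟩ := Nat.ne_zero_of_mem_divisorsAntidiagonal hp
        rw [← mul_assoc,
          hmult p.1 p.2 (Nat.one_le_iff_ne_zero.mpr h1) (Nat.one_le_iff_ne_zero.mpr h2),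
          Finset.sum_mul]
        exact Finset.sum_congr rfl fun d hd => by rw [hpN]
    _ = ∑ x ∈ N.divisorsAntidiagonal.sigma (fun p => (Nat.gcd p.1 p.2).divisors),
          a (N / x.2 ^ 2) * (x.1.2:ℂ)^w := Finset.sum_sigma' _ _ _
    _ = ∑ x ∈ N.divisorsAntidiagonal.sigma
            (fun q => (q.1.divisors.filter (fun k => k*k = q.1)) ×ˢ q.2.divisors),
          (x.2.1:ℂ)^w * (a x.1.2 * (x.2.2:ℂ)^w) := by
        refine Finset.sum_nbij'
          (i := fun x => ⟨(x.2*x.2, N/(x.2*x.2)), (x.2, x.1.2/x.2)⟩)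
          (j := fun y => ⟨(N/(y.2.1*y.2.2), y.2.1*y.2.2), y.2.1⟩) ?_ ?_ ?_ ?_ ?_
        · rintro ⟨⟨m,n⟩, d⟩ hx
          simp only [Finset.mem_sigma, Nat.mem_divisorsAntidiagonal, Nat.mem_divisors,
            Finset.mem_filter, Finset.mem_product] at hx ⊢
          obtain ⟨⟨hmn, hN0⟩, hd, hg0⟩ := hx
          have hdm : d ∣ m := hd.trans (Nat.gcd_dvd_left m n)
          have hdn : d ∣ n := hd.trans (Nat.gcd_dvd_right m n)
          have hddN : d*d ∣ N := hmn ▸ mul_dvd_mul hdm hdn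
          have hd0 : d ≠ 0 := by
            rintro rfl
            rw [Nat.zero_dvd] at hd
            rw [hd] at hg0
            exact hg0 rfl
          have hdd0 : d*d ≠ 0 := mul_ne_zero hd0 hd0
          have hNdd : N / (d*d) = (m/d) * (n/d) := by
            rw [Nat.div_mul_div_comm hdm hdn, hmn]
          refine ⟨⟨Nat.mul_div_cancel' hddN, hN0⟩, ⟨⟨dvd_mul_right d d, hdd0⟩, trivial⟩,
            ⟨?_, ?_⟩⟩
          · rw [hNdd]; exact dvd_mul_left (n/d) (m/d)
          · exact (Nat.div_pos (Nat.le_of_dvd (Nat.pos_of_ne_zero hN0) hddN)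
              (Nat.pos_of_ne_zero hdd0)).ne'
        · rintro ⟨⟨e,f⟩, k, c⟩ hy
          simp only [Finset.mem_sigma, Nat.mem_divisorsAntidiagonal, Nat.mem_divisors,
            Finset.mem_filter, Finset.mem_product] at hy ⊢
          obtain ⟨⟨hef, hN0⟩, ⟨⟨hke, he0⟩, hkk⟩, ⟨hcf, hf0⟩⟩ := hy
          have hk0 : k ≠ 0 := by rintro rfl; exact he0 (by simpa using hkk.symm)
          have hc0 : c ≠ 0 := by
            rintro rfl; exact hf0 (Nat.eq_zero_of_zero_dvd hcf)
          have hkc0 : k*c ≠ 0 := mul_ne_zero hk0 hc0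
          have hN' : N = (k*c) * (k*(f/c)) := by
            rw [show (k*c) * (k*(f/c)) = (k*k)*(c*(f/c)) by ring,
              Nat.mul_div_cancel' hcf, hkk, hef]
          have hkcN : k*c ∣ N := Dvd.intro _ hN'.symm
          have hNdiv : N / (k*c) = k * (f/c) := by
            rw [hN', Nat.mul_div_cancel_left _ (Nat.pos_of_ne_zero hkc0)]
          refine ⟨⟨Nat.div_mul_cancel hkcN, hN0⟩, Nat.dvd_gcd ?_ (dvd_mul_right k c), ?_⟩
          · rw [hNdiv]; exact dvd_mul_right k (f/c)
          · exact fun h => hkc0 (Nat.gcd_eq_zero_iff.mp h).2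
        · rintro ⟨⟨m,n⟩, d⟩ hx
          simp only [Finset.mem_sigma, Nat.mem_divisorsAntidiagonal, Nat.mem_divisors,
            Finset.mem_filter] at hx
          obtain ⟨⟨hmn, hN0⟩, hd, hg0⟩ := hx
          have hdn : d ∣ n := hd.trans (Nat.gcd_dvd_right m n)
          have hn0 : n ≠ 0 := by rintro rfl; rw [mul_zero] at hmn; exact hN0 hmn.symm
          have h1 : d * (n/d) = n := Nat.mul_div_cancel' hdn
          have h2 : N / n = m := by
            rw [← hmn, mul_comm]
            exact Nat.mul_div_cancel_left _ (Nat.pos_of_ne_zero hn0)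
          dsimp only
          rw [h1, h2]
        · rintro ⟨⟨e,f⟩, k, c⟩ hy
          simp only [Finset.mem_sigma, Nat.mem_divisorsAntidiagonal, Nat.mem_divisors,
            Finset.mem_filter, Finset.mem_product] at hy
          obtain ⟨⟨hef, hN0⟩, ⟨⟨hke, he0⟩, hkk⟩, ⟨hcf, hf0⟩⟩ := hy
          have hk0 : k ≠ 0 := by rintro rfl; exact he0 (by simpa using hkk.symm)
          have h4 : k * c / k = c := Nat.mul_div_cancel_left c (Nat.pos_of_ne_zero hk0)
          have h3 : N / (k*k) = f := by
            rw [hkk, ← hef, Nat.mul_div_cancel_left _ (Nat.pos_of_ne_zero he0)]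
          dsimp only
          rw [h4, h3, hkk]
        · rintro ⟨⟨m,n⟩, d⟩ hx
          simp only [Finset.mem_sigma, Nat.mem_divisorsAntidiagonal, Nat.mem_divisors,
            Finset.mem_filter] at hx
          obtain ⟨⟨hmn, hN0⟩, hd, hg0⟩ := hx
          have hdn : d ∣ n := hd.trans (Nat.gcd_dvd_right m n)
          have hcpow : ((n:ℕ):ℂ)^w = (d:ℂ)^w * ((n/d : ℕ):ℂ)^w := by
            conv_lhs => rw [← Nat.mul_div_cancel' hdn]
            rw [Nat.cast_mul, natCast_mul_natCast_cpow]
          simp only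
          rw [hcpow]
          ring
    _ = ∑ q ∈ N.divisorsAntidiagonal,
          (∑ k ∈ q.1.divisors.filter (fun k => k*k = q.1), (k:ℂ)^w) *
            (a q.2 * (∑ c ∈ q.2.divisors, (c:ℂ)^w)) := by
        rw [Finset.sum_sigma]
        refine Finset.sum_congr rfl fun q hq => ?_
        rw [Finset.sum_product, Finset.mul_sum, Finset.sum_mul_sum]

open LSeries in
open scoped LSeries.notation in
private lemma hecke_zeta_eq (w s : ℂ) (hz : 1 < (2*s - w).re) :
    LSeries (fun n : ℕ => ∑ k ∈ n.divisors.filter (fun k => k*k = n), (k:ℂ)^w) s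
      = riemannZeta (2*s - w) := by
  set Z : ℕ → ℂ := fun n => ∑ k ∈ n.divisors.filter (fun k => k*k = n), (k:ℂ)^w with hZ
  have hinj : Function.Injective (fun k : ℕ => (k+1)*(k+1)) := by
    intro i j h
    simpa using Nat.mul_self_inj.mp (h : (i+1)*(i+1) = (j+1)*(j+1))
  have hsupp : Function.support (term Z s) ⊆ Set.range (fun k : ℕ => (k+1)*(k+1)) := by
    intro n hn
    simp only [Function.mem_support] at hn
    have hn0 : n ≠ 0 := by rintro rfl; exact hn (term_zero _ _)
    have hZn : Z n ≠ 0 := by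
      intro h; rw [term_of_ne_zero hn0, h, zero_div] at hn; exact hn rfl
    have : (n.divisors.filter (fun k => k*k = n)).Nonempty := by
      by_contra h
      rw [Finset.not_nonempty_iff_eq_empty] at h
      exact hZn (by rw [hZ]; simp [h])
    obtain ⟨k, hk⟩ := this
    simp only [Finset.mem_filter, Nat.mem_divisors] at hk
    have hk0 : k ≠ 0 := by rintro rfl; exact hn0 (by simpa using hk.2.symm)
    refine ⟨k - 1, ?_⟩
    simp only
    have hkk : k - 1 + 1 = k := by omega
    rw [hkk]; exact hk.2
  have htr := hinj.tsum_eq (f := term Z s) hsupp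
  rw [LSeries, ← htr, zeta_eq_tsum_one_div_nat_add_one_cpow hz]
  refine tsum_congr fun k => ?_
  have hne : (k+1)*(k+1) ≠ 0 := by positivity
  have hZv : Z ((k+1)*(k+1)) = ((k+1:ℕ):ℂ)^w := by
    rw [hZ]; simp only [hecke_filter_sq (k+1) k.succ_ne_zero, Finset.sum_singleton]
  have hcast : (((k+1)*(k+1) : ℕ) : ℂ) = ((k+1:ℕ):ℂ) * ((k+1:ℕ):ℂ) := by push_cast; ring
  rw [term_of_ne_zero hne, hZv, hcast, natCast_mul_natCast_cpow]
  have hx' : ((k+1:ℕ):ℂ) = (k:ℂ)+1 := by push_cast; ring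
  rw [← hx']
  set x : ℂ := ((k+1:ℕ):ℂ) with hxdef
  have hx0 : x ≠ 0 := Nat.cast_ne_zero.mpr k.succ_ne_zero
  have hxw : x^w ≠ 0 := by simp [cpow_eq_zero_iff, hx0]
  have e1 : x^s * x^s = x^w * x^(2*s-w) := by
    rw [← cpow_add _ _ hx0, ← cpow_add _ _ hx0]; congr 1; ring
  rw [e1, ← div_div, div_self hxw]

open LSeries in
open scoped LSeries.notation in
theorem hecke_dirichlet_series_factorization
    (a : ℕ → ℂ) (A θ : ℝ) (w s : ℂ)
    (ha1 : a 1 = 1)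
    (hmult : ∀ m n : ℕ, 1 ≤ m → 1 ≤ n →
      a m * a n = ∑ d ∈ (Nat.gcd m n).divisors, a (m * n / d ^ 2))
    (hA : 0 < A) (hθ : 0 ≤ θ)
    (hbound : ∀ n : ℕ, 1 ≤ n → ‖a n‖ ≤ A * (n : ℝ) ^ θ)
    (hs : 1 + θ + max w.re 0 < s.re) :
    Summable (fun n : ℕ => ‖a (n + 1) * ((n + 1 : ℕ) : ℂ) ^ (-s)‖) ∧
    Summable (fun n : ℕ => ‖a (n + 1) * ((n + 1 : ℕ) : ℂ) ^ (-(s - w))‖) ∧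
    Summable (fun n : ℕ =>
      ‖a (n + 1) * csigma w (n + 1) * ((n + 1 : ℕ) : ℂ) ^ (-s)‖) ∧
    riemannZeta (2 * s - w) ≠ 0 ∧
    (∑' n : ℕ, a (n + 1) * csigma w (n + 1) * ((n + 1 : ℕ) : ℂ) ^ (-s)) =
      (∑' n : ℕ, a (n + 1) * ((n + 1 : ℕ) : ℂ) ^ (-s)) *
        (∑' n : ℕ, a (n + 1) * ((n + 1 : ℕ) : ℂ) ^ (-(s - w))) /
        riemannZeta (2 * s - w) := by
  have hMw : w.re ≤ max w.re 0 := le_max_left _ _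
  have hM0 : (0:ℝ) ≤ max w.re 0 := le_max_right _ _
  have hb : ∀ n : ℕ, n ≠ 0 → ‖a n‖ ≤ A * (n:ℝ) ^ θ := fun n hn =>
    hbound n (Nat.one_le_iff_ne_zero.mpr hn)
  set G : ℕ → ℂ := fun n => a n * (n:ℂ)^w with hGdef
  set H : ℕ → ℂ := fun n => a n * csigma w n with hHdef
  set Z : ℕ → ℂ := fun n => ∑ k ∈ n.divisors.filter (fun k => k*k = n), (k:ℂ)^w with hZdef
  -- summability of a
  have hAs : LSeriesSummable a s := by
    refine LSeriesSummable_of_le_const_mul_rpow (x := θ + 1) (by linarith) ⟨A, fun n hn => ?_⟩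
    rw [add_sub_cancel_right]; exact hb n hn
  -- summability of G
  have hGs : LSeriesSummable G s := by
    refine LSeriesSummable_of_le_const_mul_rpow (x := θ + w.re + 1) (by linarith)
      ⟨A, fun n hn => ?_⟩
    rw [add_sub_cancel_right]
    have hn0 : (0:ℝ) < (n:ℝ) := by exact_mod_cast Nat.pos_of_ne_zero hn
    rw [hGdef, norm_mul, norm_natCast_cpow_of_pos (Nat.pos_of_ne_zero hn), Real.rpow_add hn0]
    rw [← mul_assoc]
    exact mul_le_mul_of_nonneg_right (hb n hn) (Real.rpow_nonneg hn0.le _)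
  -- summability of Z
  have hZs : LSeriesSummable Z s := by
    refine LSeriesSummable_of_le_const_mul_rpow (x := max w.re 0 + 1) (by linarith)
      ⟨1, fun n hn => ?_⟩
    rw [add_sub_cancel_right, one_mul]
    rcases Finset.eq_empty_or_nonempty (n.divisors.filter (fun k => k*k = n)) with he | hne
    · rw [hZdef]
      dsimp only
      rw [he, Finset.sum_empty, norm_zero]
      positivity
    · obtain ⟨k, hk⟩ := hne
      simp only [Finset.mem_filter, Nat.mem_divisors] at hk
      obtain ⟨⟨hkn, -⟩, hkk⟩ := hk
      have hk0 : k ≠ 0 := by rintro rfl; exact hn (by simpa using hkk.symm)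
      subst hkk
      have hZv : Z (k*k) = ((k:ℕ):ℂ)^w := by
        rw [hZdef]; simp only [hecke_filter_sq k hk0, Finset.sum_singleton]
      rw [hZv, norm_natCast_cpow_of_pos (Nat.pos_of_ne_zero hk0)]
      have hk1 : (1:ℝ) ≤ (k:ℝ) := by exact_mod_cast Nat.one_le_iff_ne_zero.mpr hk0
      calc (k:ℝ)^w.re ≤ (k:ℝ)^(max w.re 0) :=
            Real.rpow_le_rpow_of_exponent_le hk1 hMw
        _ ≤ ((k*k : ℕ):ℝ)^(max w.re 0) := by
            refine Real.rpow_le_rpow (by positivity) ?_ hM0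
            exact_mod_cast Nat.le_of_dvd (Nat.pos_of_ne_zero hn) hkn
  -- summability of H in norm
  have hHnorm : Summable (fun n => ‖term H s n‖) := by
    set P : ℕ → ℂ := fun n => ((A * (n:ℝ)^(θ + w.re) : ℝ) : ℂ) with hPdef
    set Q : ℕ → ℂ := fun n => (((n:ℝ)^θ : ℝ) : ℂ) with hQdef
    set σ₀ : ℂ := (s.re : ℂ) with hσ
    have hσre : σ₀.re = s.re := by rw [hσ, Complex.ofReal_re]
    have hP : LSeriesSummable P σ₀ := by
      refine LSeriesSummable_of_le_const_mul_rpow (x := θ + w.re + 1) (by rw [hσre]; linarith)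
        ⟨A, fun n hn => ?_⟩
      rw [add_sub_cancel_right, hPdef]
      simp only [Complex.norm_real]
      exact le_of_eq (abs_of_nonneg (by positivity))
    have hQ : LSeriesSummable Q σ₀ := by
      refine LSeriesSummable_of_le_const_mul_rpow (x := θ + 1) (by rw [hσre]; linarith)
        ⟨1, fun n hn => ?_⟩
      rw [add_sub_cancel_right, hQdef, one_mul]
      simp only [Complex.norm_real]
      exact le_of_eq (abs_of_nonneg (by positivity))
    have hPQ : LSeriesSummable (P ⍟ Q) σ₀ := hP.convolution hQ
    have hPQn : Summable (fun n => ‖term (P ⍟ Q) σ₀ n‖) := hPQ.norm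
    refine Summable.of_nonneg_of_le (fun n => norm_nonneg _) (fun n => ?_) hPQn
    rcases eq_or_ne n 0 with rfl | hn
    · simp
    have hnpos : (0:ℝ) < (n:ℝ) := by exact_mod_cast Nat.pos_of_ne_zero hn
    have hconv : (P ⍟ Q) n = ((A * (n:ℝ)^θ * ∑ d ∈ n.divisors, (d:ℝ)^w.re : ℝ) : ℂ) := by
      rw [LSeries.convolution_def]
      dsimp only
      have : ∀ p ∈ n.divisorsAntidiagonal, P p.1 * Q p.2
          = ((A * (n:ℝ)^θ * (p.1:ℝ)^w.re : ℝ) : ℂ) := by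
        intro p hp
        obtain ⟨hpn, -⟩ := Nat.mem_divisorsAntidiagonal.mp hp
        obtain ⟨hp1, hp2⟩ := Nat.ne_zero_of_mem_divisorsAntidiagonal hp
        have h1pos : (0:ℝ) < (p.1:ℝ) := by exact_mod_cast Nat.pos_of_ne_zero hp1
        have h2pos : (0:ℝ) < (p.2:ℝ) := by exact_mod_cast Nat.pos_of_ne_zero hp2
        rw [hPdef, hQdef]
        rw [← Complex.ofReal_mul]
        congr 1
        rw [Real.rpow_add h1pos, ← mul_assoc]
        have hn' : (n:ℝ) = (p.1:ℝ) * (p.2:ℝ) := by exact_mod_cast hpn.symm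
        rw [hn', Real.mul_rpow h1pos.le h2pos.le]
        ring
      rw [Finset.sum_congr rfl this, ← Complex.ofReal_sum]
      congr 1
      rw [← Finset.mul_sum]
      congr 1
      exact Nat.sum_divisorsAntidiagonal (fun d e => (d:ℝ)^w.re)
    have hS : (0:ℝ) ≤ ∑ d ∈ n.divisors, (d:ℝ)^w.re :=
      Finset.sum_nonneg fun d hd => Real.rpow_nonneg (Nat.cast_nonneg d) _
    rw [norm_term_eq, norm_term_eq, if_neg hn, if_neg hn, hσre, hconv]
    gcongr
    have hcs : ‖csigma w n‖ ≤ ∑ d ∈ n.divisors, (d:ℝ)^w.re := by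
      refine (norm_sum_le _ _).trans ?_
      refine Finset.sum_le_sum fun d hd => ?_
      have hd0 : 0 < d := Nat.pos_of_mem_divisors hd
      exact le_of_eq (norm_natCast_cpow_of_pos hd0 w)
    calc ‖H n‖ = ‖a n‖ * ‖csigma w n‖ := norm_mul _ _
      _ ≤ (A * (n:ℝ)^θ) * ∑ d ∈ n.divisors, (d:ℝ)^w.re :=
          mul_le_mul (hb n hn) hcs (norm_nonneg _) (by positivity)
      _ = A * (n:ℝ)^θ * ∑ d ∈ n.divisors, (d:ℝ)^w.re := by ring
      _ ≤ |A * (n:ℝ)^θ * ∑ d ∈ n.divisors, (d:ℝ)^w.re| := le_abs_self _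
      _ = ‖((A * (n:ℝ)^θ * ∑ d ∈ n.divisors, (d:ℝ)^w.re : ℝ) : ℂ)‖ := by
          rw [Complex.norm_real, Real.norm_eq_abs]
  have hHs : LSeriesSummable H s := Summable.of_norm hHnorm
  -- term identities
  have hterm_a : ∀ n : ℕ, a (n+1) * ((n+1:ℕ):ℂ)^(-s) = term a s (n+1) := by
    intro n
    rw [term_of_ne_zero n.succ_ne_zero, cpow_neg, ← div_eq_mul_inv]
  have hterm_G : ∀ n : ℕ, a (n+1) * ((n+1:ℕ):ℂ)^(-(s-w)) = term G s (n+1) := by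
    intro n
    have hx0 : ((n+1:ℕ):ℂ) ≠ 0 := Nat.cast_ne_zero.mpr n.succ_ne_zero
    rw [term_of_ne_zero n.succ_ne_zero, hGdef, neg_sub, cpow_sub _ _ hx0]
    dsimp only
    rw [mul_div_assoc]
  have hterm_H : ∀ n : ℕ, a (n+1) * csigma w (n+1) * ((n+1:ℕ):ℂ)^(-s) = term H s (n+1) := by
    intro n
    rw [term_of_ne_zero n.succ_ne_zero, cpow_neg, ← div_eq_mul_inv]
  -- the three summability statements
  have S1 : Summable (fun n : ℕ => ‖a (n + 1) * ((n + 1 : ℕ) : ℂ) ^ (-s)‖) := by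
    refine ((summable_nat_add_iff 1).2 (Summable.norm hAs)).congr fun n => ?_
    rw [hterm_a n]
  have S2 : Summable (fun n : ℕ => ‖a (n + 1) * ((n + 1 : ℕ) : ℂ) ^ (-(s - w))‖) := by
    refine ((summable_nat_add_iff 1).2 (Summable.norm hGs)).congr fun n => ?_
    rw [hterm_G n]
  have S3 : Summable (fun n : ℕ =>
      ‖a (n + 1) * csigma w (n + 1) * ((n + 1 : ℕ) : ℂ) ^ (-s)‖) := by
    refine ((summable_nat_add_iff 1).2 hHnorm).congr fun n => ?_
    rw [hterm_H n]
  -- zeta facts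
  have hzre : (2*s - w).re = 2*s.re - w.re := by
    simp [Complex.sub_re, Complex.mul_re]
  have hz1 : 1 < (2*s - w).re := by rw [hzre]; linarith
  have hzeta : LSeries Z s = riemannZeta (2*s - w) := hecke_zeta_eq w s hz1
  have hzne : riemannZeta (2*s - w) ≠ 0 := riemannZeta_ne_zero_of_one_lt_re hz1
  -- tsum conversions
  have tsum_a : (∑' n : ℕ, a (n + 1) * ((n + 1 : ℕ) : ℂ) ^ (-s)) = LSeries a s := by
    rw [LSeries, Summable.tsum_eq_zero_add hAs, term_zero, zero_add]
    exact tsum_congr fun n => hterm_a n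
  have tsum_G : (∑' n : ℕ, a (n + 1) * ((n + 1 : ℕ) : ℂ) ^ (-(s-w))) = LSeries G s := by
    rw [LSeries, Summable.tsum_eq_zero_add hGs, term_zero, zero_add]
    exact tsum_congr fun n => hterm_G n
  have tsum_H : (∑' n : ℕ, a (n + 1) * csigma w (n + 1) * ((n + 1 : ℕ) : ℂ) ^ (-s))
      = LSeries H s := by
    rw [LSeries, Summable.tsum_eq_zero_add hHs, term_zero, zero_add]
    exact tsum_congr fun n => hterm_H n
  -- main identity
  have hconveq : (a ⍟ G) = (Z ⍟ H) := hecke_conv_eq a w hmult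
  have hmain : riemannZeta (2*s - w) * LSeries H s = LSeries a s * LSeries G s := by
    rw [← hzeta, ← LSeries_convolution' hZs hHs, ← hconveq, LSeries_convolution' hAs hGs]
  refine ⟨S1, S2, S3, hzne, ?_⟩
  rw [tsum_a, tsum_G, tsum_H, eq_div_iff hzne, mul_comm (LSeries H s)]
  exact hmain
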